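/- Let z₁ < z₂ < ⋯ < z_N be the zeros of the N-th Hermite polynomial H_N. Then for each i, z_i = ∑_{k≠i} 2/(z_i − z_k)³. -/

import Mathlib

open Finset Polynomial


lemma aux_deriv {ι : Type*} [DecidableEq ι] (z : ι → ℝ) (y : ℝ)
    (s : Finset ι) (h : ∀ k ∈ s, y - z k ≠ 0) :
    eval y (derivative (∏ k ∈ s, (X - C (z k))))
        = (∏ k ∈ s, (y - z k)) * (∑ k ∈ s, (y - z k)⁻¹) ∧
    eval y (derivative (derivative (∏ k ∈ s, (X - C (z k)))))
        = (∏ k ∈ s, (y - z k)) *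
          ((∑ k ∈ s, (y - z k)⁻¹)^2 - ∑ k ∈ s, ((y - z k)⁻¹)^2) ∧
    eval y (derivative (derivative (derivative (∏ k ∈ s, (X - C (z k))))))
        = (∏ k ∈ s, (y - z k)) *
          ((∑ k ∈ s, (y - z k)⁻¹)^3
            - 3 * (∑ k ∈ s, (y - z k)⁻¹) * (∑ k ∈ s, ((y - z k)⁻¹)^2)
            + 2 * ∑ k ∈ s, ((y - z k)⁻¹)^3) := by
  induction s using Finset.cons_induction with
  | empty => simp
  | cons a s ha ih =>
    have hd : y - z a ≠ 0 := h a (Finset.mem_cons_self a s)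
    obtain ⟨ih1, ih2, ih3⟩ := ih (fun k hk => h k (Finset.mem_cons.mpr (Or.inr hk)))
    have hev : eval y (∏ k ∈ s, (X - C (z k))) = ∏ k ∈ s, (y - z k) := by
      simp [eval_prod]
    simp only [Finset.prod_cons, Finset.sum_cons, derivative_mul, derivative_sub,
      derivative_X, derivative_C, sub_zero, one_mul, derivative_add, derivative_one,
      zero_mul, add_zero, zero_add, eval_add, eval_mul, eval_sub, eval_X, eval_C,
      eval_one, ih1, ih2, ih3, hev]
    refine ⟨by field_simp, by field_simp; ring, by field_simp; ring⟩


theorem hermite_zeros_sum_inv_cube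
    (N : ℕ) (H : Polynomial ℝ) (cN : ℝ) (hc : cN ≠ 0)
    (z : Fin N → ℝ) (hz : StrictMono z)
    (hfact : H = C cN * ∏ i : Fin N, (X - C (z i)))
    (hode : derivative (derivative H) - C 2 * X * derivative H + C (2 * (N : ℝ)) * H = 0) :
    ∀ i : Fin N, z i = ∑ k ∈ Finset.univ.erase i, 2 / (z i - z k) ^ 3 := by
  intro i
  set y := z i with hy
  set s : Finset (Fin N) := Finset.univ.erase i with hs
  have hne : ∀ k ∈ s, y - z k ≠ 0 := by
    intro k hk
    have hki : k ≠ i := (Finset.mem_erase.mp hk).1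
    exact sub_ne_zero.mpr fun h => hki (hz.injective h).symm
  set G : Polynomial ℝ := ∏ k ∈ s, (X - C (z k)) with hG
  have hH : H = C cN * ((X - C (z i)) * G) := by
    rw [hfact, ← Finset.mul_prod_erase _ _ (Finset.mem_univ i)]
  have e0 : eval y H = 0 := by rw [hH]; simp [hy]
  have e1 : eval y (derivative H) = cN * eval y G := by
    rw [hH]; simp [derivative_mul, hy]
  have e2 : eval y (derivative (derivative H)) = cN * (2 * eval y (derivative G)) := by
    rw [hH]; simp [derivative_mul, hy]; try ring
    try exact Or.inl trivial
  have e3 : eval y (derivative (derivative (derivative H)))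
      = cN * (3 * eval y (derivative (derivative G))) := by
    rw [hH]; simp [derivative_mul, hy]; try ring
    try exact Or.inl trivial
  have e4 : eval y (derivative (derivative (derivative (derivative H))))
      = cN * (4 * eval y (derivative (derivative (derivative G)))) := by
    rw [hH]; simp [derivative_mul, hy]; try ring
    try exact Or.inl trivial
  have o1 := congrArg (eval y) hode
  have hode1 := congrArg derivative hode
  have o2 := congrArg (eval y) hode1
  have hode2 := congrArg derivative hode1
  have o3 := congrArg (eval y) hode2
  simp only [derivative_add, derivative_sub, derivative_mul, derivative_C, derivative_X,
    derivative_zero, zero_mul, one_mul, add_zero, zero_add, mul_one,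
    eval_add, eval_sub, eval_mul, eval_C, eval_X, eval_zero] at o1 o2 o3
  rw [e0, e1, e2, e3, e4] at *
  obtain ⟨d1, d2, d3⟩ := aux_deriv z y s hne
  rw [← hG] at d1 d2 d3
  set p : ℝ := ∏ k ∈ s, (y - z k) with hp
  set S1 : ℝ := ∑ k ∈ s, (y - z k)⁻¹ with hS1def
  set S2 : ℝ := ∑ k ∈ s, ((y - z k)⁻¹)^2 with hS2def
  set S3 : ℝ := ∑ k ∈ s, ((y - z k)⁻¹)^3 with hS3def
  have hpne : p ≠ 0 := Finset.prod_ne_zero_iff.mpr hne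
  have hu : cN * p ≠ 0 := mul_ne_zero hc hpne
  have hevG : eval y G = p := by rw [hG]; simp [eval_prod, hp]
  rw [d1, hevG] at o1
  rw [d1, d2, hevG] at o2
  rw [d1, d2, d3] at o3
  have hS1 : S1 = y := mul_left_cancel₀ hu (by linear_combination o1/2)
  rw [hS1] at o2 o3
  have h2 : cN * p * (3 * S2) = cN * p * (2*N - 2 - y^2) := by
    linear_combination -o2
  have hsum : ∑ k ∈ s, 2 / (y - z k) ^ 3 = 2 * S3 := by
    rw [hS3def, Finset.mul_sum]
    refine Finset.sum_congr rfl fun k _ => ?_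
    rw [div_eq_mul_inv, inv_pow]
  rw [hsum]
  exact mul_left_cancel₀ hu (by linear_combination (-1/4)*o3 - (y/2)*h2)
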